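/- Let Q be a left quasigroup, α a congruence of Q, and π_α : LMlt(Q) → LMlt(Q/α) the canonical surjective homomorphism with L_x ↦ L_{[x]}. Then the maps N ↦ π_α(N) and K ↦ π_α^{-1}(K) give a lattice isomorphism between {N ∈ Norm(Q) : LMlt^α ≤ N} and Norm(Q/α). -/

import Mathlib

/-! Basic theory of left quasigroups, following the paper. -/

structure LeftQuasigroup (Q : Type*) where
  op : Q → Q → Q
  ld : Q → Q → Q
  op_ld : ∀ x y, op x (ld x y) = y
  ld_op : ∀ x y, ld x (op x y) = y

/-- Orbit relation of a subgroup of permutations. -/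
def orbRel {Q : Type*} (N : Subgroup (Equiv.Perm Q)) (x y : Q) : Prop := ∃ h ∈ N, h y = x

/-- Orbit equivalence relation of a subgroup of permutations. -/
def orbSetoid {Q : Type*} (N : Subgroup (Equiv.Perm Q)) : Setoid Q where
  r := orbRel N
  iseqv := by
    constructor
    · exact fun x => ⟨1, N.one_mem, rfl⟩
    · rintro x y ⟨h, hN, rfl⟩
      exact ⟨h⁻¹, N.inv_mem hN, h.symm_apply_apply y⟩
    · rintro x y z ⟨h, hN, rfl⟩ ⟨g, gN, rfl⟩
      exact ⟨h * g, N.mul_mem hN gN, rfl⟩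

/-- The subgroup of permutations moving every point inside its `α`-class. -/
def kerRel {Q : Type*} (α : Setoid Q) : Subgroup (Equiv.Perm Q) where
  carrier := {g | ∀ x, α.r (g x) x}
  one_mem' := fun x => α.refl x
  mul_mem' := by
    intro a b ha hb x
    exact α.trans (ha (b x)) (hb x)
  inv_mem' := by
    intro a ha x
    have := ha (a⁻¹ x)
    rw [← Equiv.Perm.mul_apply, mul_inv_cancel, Equiv.Perm.one_apply] at this
    exact α.symm this

/-- Pointwise stabilizer of `x` in `N`. -/
def pstab {Q : Type*} (N : Subgroup (Equiv.Perm Q)) (x : Q) : Subgroup (Equiv.Perm Q) :=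
  N ⊓ MulAction.stabilizer (Equiv.Perm Q) x

/-- Meet of a family of setoids. -/
def infSetoid {Q I : Type*} (α : I → Setoid Q) : Setoid Q where
  r x y := ∀ i, (α i).r x y
  iseqv := ⟨fun x i => (α i).refl x, fun h i => (α i).symm (h i),
    fun h g i => (α i).trans (h i) (g i)⟩

namespace LeftQuasigroup

variable {Q : Type*} (S : LeftQuasigroup Q)

/-- Left translation as a permutation. -/
def L (x : Q) : Equiv.Perm Q := ⟨S.op x, S.ld x, S.ld_op x, S.op_ld x⟩

/-- The left multiplication group. -/
def LMlt : Subgroup (Equiv.Perm Q) := Subgroup.closure (Set.range S.L)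

/-- The displacement group relative to a binary relation `r`. -/
def disRel (r : Q → Q → Prop) : Subgroup (Equiv.Perm Q) :=
  Subgroup.closure {g | ∃ h ∈ S.LMlt, ∃ x y, r x y ∧ g = h * (S.L x * (S.L y)⁻¹) * h⁻¹}

/-- The displacement group. -/
def Dis : Subgroup (Equiv.Perm Q) := S.disRel fun _ _ => True

/-- `Dis^α`. -/
def disUp (α : Setoid Q) : Subgroup (Equiv.Perm Q) := S.Dis ⊓ kerRel α

/-- `LMlt^α`, the kernel of `π_α`. -/
def lmltKer (α : Setoid Q) : Subgroup (Equiv.Perm Q) := S.LMlt ⊓ kerRel α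

/-- Congruences of a left quasigroup. -/
structure IsCongruence (α : Setoid Q) : Prop where
  op_compat : ∀ {x y z w : Q}, α.r x y → α.r z w → α.r (S.op x z) (S.op y w)
  ld_compat : ∀ {x y z w : Q}, α.r x y → α.r z w → α.r (S.ld x z) (S.ld y w)

theorem L_mem_lmlt (x : Q) : S.L x ∈ S.LMlt := Subgroup.subset_closure ⟨x, rfl⟩

theorem disRel_le_lmlt (r : Q → Q → Prop) : S.disRel r ≤ S.LMlt := by
  refine (Subgroup.closure_le _).2 ?_
  rintro g ⟨h, hh, x, y, _, rfl⟩
  exact mul_mem (mul_mem hh (mul_mem (S.L_mem_lmlt x) (inv_mem (S.L_mem_lmlt y)))) (inv_mem hh)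

theorem lmlt_maps {α : Setoid Q} (hα : S.IsCongruence α) {g : Equiv.Perm Q}
    (hg : g ∈ S.LMlt) : ∀ x y, α.r x y → α.r (g x) (g y) := by
  have H : ∀ g ∈ S.LMlt,
      (∀ x y, α.r x y → α.r (g x) (g y)) ∧ (∀ x y, α.r x y → α.r (g⁻¹ x) (g⁻¹ y)) := by
    intro g hg
    induction hg using Subgroup.closure_induction with
    | mem g hgen =>
      obtain ⟨z, rfl⟩ := hgen
      constructor
      · intro x y h; exact hα.op_compat (α.refl z) h
      · intro x y h; exact hα.ld_compat (α.refl z) h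
    | one =>
      constructor <;> intro x y h <;> simpa using h
    | mul a b _ _ ha hb =>
      constructor
      · intro x y h
        exact ha.1 _ _ (hb.1 _ _ h)
      · intro x y h
        have := hb.2 _ _ (ha.2 _ _ h)
        simpa [mul_inv_rev] using this
    | inv a _ ha =>
      refine ⟨ha.2, ?_⟩
      intro x y h
      simpa using ha.1 x y h
  exact (H g hg).1

/-- The blockwise stabilizer `Dis(Q)_{[x]_α}`. -/
def blockStab (α : Setoid Q) (hα : S.IsCongruence α) (x : Q) : Subgroup (Equiv.Perm Q) where
  carrier := {g | g ∈ S.Dis ∧ α.r (g x) x}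
  one_mem' := ⟨S.Dis.one_mem, α.refl x⟩
  mul_mem' := by
    intro a b ha hb
    refine ⟨S.Dis.mul_mem ha.1 hb.1, ?_⟩
    exact α.trans (S.lmlt_maps hα (S.disRel_le_lmlt _ ha.1) _ _ hb.2) ha.2
  inv_mem' := by
    intro a ha
    refine ⟨S.Dis.inv_mem ha.1, ?_⟩
    have h2 := S.lmlt_maps hα (inv_mem (S.disRel_le_lmlt _ ha.1)) _ _ ha.2
    rw [← Equiv.Perm.mul_apply, inv_mul_cancel, Equiv.Perm.one_apply] at h2
    exact α.symm h2

/-- The admissible subgroups `Norm(Q)`. -/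
def Norm : Set (Subgroup (Equiv.Perm Q)) :=
  {N | N ≤ S.LMlt ∧ (∀ h ∈ S.LMlt, ∀ n ∈ N, h * n * h⁻¹ ∈ N) ∧ S.disRel (orbRel N) ≤ N}

/-- Image of a subgroup along the canonical projection `π_α`. -/
def piSub (α : Setoid Q) (N : Subgroup (Equiv.Perm Q)) : Subgroup (Equiv.Perm (Quotient α)) where
  carrier := {k | ∃ h ∈ N, ∀ x : Q, k (Quotient.mk α x) = Quotient.mk α (h x)}
  one_mem' := ⟨1, N.one_mem, fun _ => rfl⟩
  mul_mem' := by
    rintro a b ⟨ha, haN, hae⟩ ⟨hb, hbN, hbe⟩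
    refine ⟨ha * hb, N.mul_mem haN hbN, fun x => ?_⟩
    show a (b (Quotient.mk α x)) = _
    rw [hbe, hae]; rfl
  inv_mem' := by
    rintro a ⟨h, hN, he⟩
    refine ⟨h⁻¹, N.inv_mem hN, fun x => ?_⟩
    have h1 := he (h⁻¹ x)
    rw [← Equiv.Perm.mul_apply, mul_inv_cancel, Equiv.Perm.one_apply] at h1
    rw [← h1]
    rw [← Equiv.Perm.mul_apply, inv_mul_cancel, Equiv.Perm.one_apply]

/-- Preimage of a subgroup along the canonical projection `π_α`. -/
def piPre (α : Setoid Q) (K : Subgroup (Equiv.Perm (Quotient α))) : Subgroup (Equiv.Perm Q) where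
  carrier := {h | h ∈ S.LMlt ∧ ∃ k ∈ K, ∀ x : Q, k (Quotient.mk α x) = Quotient.mk α (h x)}
  one_mem' := ⟨S.LMlt.one_mem, 1, K.one_mem, fun _ => rfl⟩
  mul_mem' := by
    rintro a b ⟨haL, ka, kaK, hae⟩ ⟨hbL, kb, kbK, hbe⟩
    refine ⟨S.LMlt.mul_mem haL hbL, ka * kb, K.mul_mem kaK kbK, fun x => ?_⟩
    show ka (kb (Quotient.mk α x)) = _
    rw [hbe, hae]; rfl
  inv_mem' := by
    rintro a ⟨haL, k, kK, he⟩
    refine ⟨S.LMlt.inv_mem haL, k⁻¹, K.inv_mem kK, fun x => ?_⟩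
    have h1 := he (a⁻¹ x)
    rw [← Equiv.Perm.mul_apply, mul_inv_cancel, Equiv.Perm.one_apply] at h1
    rw [← h1]
    rw [← Equiv.Perm.mul_apply, inv_mul_cancel, Equiv.Perm.one_apply]

/-- Quotient left quasigroup. -/
def quotLQ (α : Setoid Q) (hα : S.IsCongruence α) : LeftQuasigroup (Quotient α) where
  op := Quotient.lift₂ (fun x y => Quotient.mk α (S.op x y))
    (fun _ _ _ _ h1 h2 => Quotient.sound (hα.op_compat h1 h2))
  ld := Quotient.lift₂ (fun x y => Quotient.mk α (S.ld x y))
    (fun _ _ _ _ h1 h2 => Quotient.sound (hα.ld_compat h1 h2))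
  op_ld := fun a b => Quotient.inductionOn₂ a b fun x y => congrArg (Quotient.mk α) (S.op_ld x y)
  ld_op := fun a b => Quotient.inductionOn₂ a b fun x y => congrArg (Quotient.mk α) (S.ld_op x y)

/-- Idempotent left quasigroup. -/
def Idem : Prop := ∀ x : Q, S.op x x = x

/-- Left distributive law (defining quandles among idempotent left quasigroups). -/
def Ldist : Prop := ∀ x y z : Q, S.op x (S.op y z) = S.op (S.op x y) (S.op x z)

/-- A left quasigroup is faithful if the Cayley kernel is trivial. -/
def Faithful : Prop := ∀ x y : Q, (∀ z, S.op x z = S.op y z) → x = y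

/-- Connected: `LMlt` acts transitively. -/
def Connected : Prop := ∀ x y : Q, ∃ h ∈ S.LMlt, h y = x

/-- Semiregular: `Dis` acts with trivial stabilizers. -/
def Semiregular : Prop := ∀ g ∈ S.Dis, ∀ x : Q, g x = x → g = 1

/-- Subalgebras. -/
def IsSubalgebra (A : Set Q) : Prop :=
  ∀ ⦃x⦄, x ∈ A → ∀ ⦃y⦄, y ∈ A → S.op x y ∈ A ∧ S.ld x y ∈ A

/-- The left quasigroup structure on a subalgebra. -/
def subLQ (A : Set Q) (hA : S.IsSubalgebra A) : LeftQuasigroup A where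
  op a b := ⟨S.op a b, (hA a.2 b.2).1⟩
  ld a b := ⟨S.ld a b, (hA a.2 b.2).2⟩
  op_ld a b := Subtype.ext (S.op_ld a b)
  ld_op a b := Subtype.ext (S.ld_op a b)

/-- Superconnected: every subalgebra is connected. -/
def Superconnected : Prop := ∀ (A : Set Q) (hA : S.IsSubalgebra A), (S.subLQ A hA).Connected

/-- Superfaithful: every subalgebra is faithful. -/
def Superfaithful : Prop := ∀ (A : Set Q) (hA : S.IsSubalgebra A), (S.subLQ A hA).Faithful

theorem infCong {I : Type*} {α : I → Setoid Q} (hc : ∀ i, S.IsCongruence (α i)) :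
    S.IsCongruence (infSetoid α) :=
  ⟨fun h1 h2 i => (hc i).op_compat (h1 i) (h2 i),
   fun h1 h2 i => (hc i).ld_compat (h1 i) (h2 i)⟩

end LeftQuasigroup

/-- Terms in the language of left quasigroups in `n` variables. -/
inductive LQTerm : ℕ → Type
  | var : ∀ {n}, Fin n → LQTerm n
  | op : ∀ {n}, LQTerm n → LQTerm n → LQTerm n
  | ld : ∀ {n}, LQTerm n → LQTerm n → LQTerm n

/-- Evaluation of terms. -/
def evalT {Q : Type*} (S : LeftQuasigroup Q) : ∀ {n}, LQTerm n → (Fin n → Q) → Q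
  | _, .var i, v => v i
  | _, .op t s, v => S.op (evalT S t v) (evalT S s v)
  | _, .ld t s, v => S.ld (evalT S t v) (evalT S s v)

/-- The centralizing relation `C(a, b; d)` of commutator theory. -/
def CC {Q : Type*} (S : LeftQuasigroup Q) (a b d : Q → Q → Prop) : Prop :=
  ∀ (n : ℕ) (t : LQTerm (n + 1)) (x y : Q) (z u : Fin n → Q),
    a x y → (∀ i, b (z i) (u i)) →
    d (evalT S t (Fin.cons x z)) (evalT S t (Fin.cons x u)) →
    d (evalT S t (Fin.cons y z)) (evalT S t (Fin.cons y u))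

/-- Nilpotency of length `n` in the sense of commutator theory: the ascending central
series (characterized congruence by congruence) reaches the full congruence at step `n`. -/
def LeftQuasigroup.NilpotentLength {Q : Type*} (S : LeftQuasigroup Q) (n : ℕ) : Prop :=
  ∃ c : ℕ → Setoid Q,
    (∀ k, S.IsCongruence (c k)) ∧
    (∀ x y : Q, (c 0).r x y ↔ x = y) ∧
    (∀ k, ∀ β : Setoid Q, S.IsCongruence β →
      (CC S β.r (fun _ _ => True) (c k).r ↔ β ≤ c (k + 1))) ∧
    (∀ x y : Q, (c n).r x y)


namespace LeftQuasigroupAux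

open LeftQuasigroup

variable {Q : Type*} {S : LeftQuasigroup Q} {α : Setoid Q}

/-- `k` is the permutation induced by `h` on the quotient. -/
def Push (α : Setoid Q) (h : Equiv.Perm Q) (k : Equiv.Perm (Quotient α)) : Prop :=
  ∀ x : Q, k (Quotient.mk α x) = Quotient.mk α (h x)

theorem push_unique {h : Equiv.Perm Q} {k k' : Equiv.Perm (Quotient α)}
    (h1 : Push α h k) (h2 : Push α h k') : k = k' := by
  ext q
  induction q using Quotient.ind with
  | _ x => rw [h1 x, h2 x]

theorem push_mul {a b : Equiv.Perm Q} {ka kb : Equiv.Perm (Quotient α)}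
    (h1 : Push α a ka) (h2 : Push α b kb) : Push α (a * b) (ka * kb) := fun x => by
  simp only [Equiv.Perm.mul_apply, h2 x, h1 (b x)]

theorem push_inv {a : Equiv.Perm Q} {k : Equiv.Perm (Quotient α)}
    (h1 : Push α a k) : Push α a⁻¹ k⁻¹ := fun x => by
  have := h1 (a⁻¹ x)
  rw [← Equiv.Perm.mul_apply, mul_inv_cancel, Equiv.Perm.one_apply] at this
  rw [← this, ← Equiv.Perm.mul_apply, inv_mul_cancel, Equiv.Perm.one_apply]

theorem push_one : Push α (1 : Equiv.Perm Q) 1 := fun _ => rfl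

theorem push_L (hα : S.IsCongruence α) (x : Q) :
    Push α (S.L x) ((S.quotLQ α hα).L (Quotient.mk α x)) := fun _ => rfl

theorem push_exists (hα : S.IsCongruence α) {h : Equiv.Perm Q} (hh : h ∈ S.LMlt) :
    ∃ k ∈ (S.quotLQ α hα).LMlt, Push α h k := by
  induction hh using Subgroup.closure_induction with
  | mem g hgen =>
    obtain ⟨x, rfl⟩ := hgen
    exact ⟨_, (S.quotLQ α hα).L_mem_lmlt (Quotient.mk α x), push_L hα x⟩
  | one => exact ⟨1, Subgroup.one_mem _, push_one⟩
  | mul a b _ _ ha hb =>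
    obtain ⟨ka, kaL, pa⟩ := ha
    obtain ⟨kb, kbL, pb⟩ := hb
    exact ⟨ka * kb, mul_mem kaL kbL, push_mul pa pb⟩
  | inv a _ ha =>
    obtain ⟨k, kL, pk⟩ := ha
    exact ⟨k⁻¹, inv_mem kL, push_inv pk⟩

theorem push_surj (hα : S.IsCongruence α) {k : Equiv.Perm (Quotient α)}
    (hk : k ∈ (S.quotLQ α hα).LMlt) : ∃ h ∈ S.LMlt, Push α h k := by
  induction hk using Subgroup.closure_induction with
  | mem g hgen =>
    obtain ⟨q, rfl⟩ := hgen
    obtain ⟨x, rfl⟩ := q.exists_rep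
    exact ⟨S.L x, S.L_mem_lmlt x, push_L hα x⟩
  | one => exact ⟨1, Subgroup.one_mem _, push_one⟩
  | mul a b _ _ ha hb =>
    obtain ⟨ga, gaL, pa⟩ := ha
    obtain ⟨gb, gbL, pb⟩ := hb
    exact ⟨ga * gb, mul_mem gaL gbL, push_mul pa pb⟩
  | inv a _ ha =>
    obtain ⟨g, gL, pg⟩ := ha
    exact ⟨g⁻¹, inv_mem gL, push_inv pg⟩

theorem push_ker {h : Equiv.Perm Q} (hh : h ∈ S.LMlt) (hp : Push α h 1) :
    h ∈ S.lmltKer α :=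
  ⟨hh, fun x => α.symm (Quotient.exact (hp x))⟩

theorem ker_push {h : Equiv.Perm Q} (hk : h ∈ kerRel α) : Push α h 1 :=
  fun x => Quotient.sound (α.symm (hk x))

theorem mem_piSub {N : Subgroup (Equiv.Perm Q)} {k : Equiv.Perm (Quotient α)} :
    k ∈ piSub α N ↔ ∃ h ∈ N, Push α h k := Iff.rfl

theorem mem_piPre {K : Subgroup (Equiv.Perm (Quotient α))} {h : Equiv.Perm Q} :
    h ∈ S.piPre α K ↔ h ∈ S.LMlt ∧ ∃ k ∈ K, Push α h k := Iff.rfl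

theorem piPre_piSub (hα : S.IsCongruence α) {N : Subgroup (Equiv.Perm Q)}
    (hle : N ≤ S.LMlt) (hker : S.lmltKer α ≤ N) : S.piPre α (piSub α N) = N := by
  ext h
  rw [mem_piPre]
  constructor
  · rintro ⟨hL, k, ⟨n, nN, pn⟩, ph⟩
    have hmem : n⁻¹ * h ∈ S.lmltKer α := by
      refine push_ker (mul_mem (inv_mem (hle nN)) hL) ?_
      have := push_mul (push_inv pn) ph
      rwa [inv_mul_cancel] at this
    have := N.mul_mem nN (hker hmem)
    rwa [mul_inv_cancel_left] at this
  · intro hN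
    obtain ⟨k, _, pk⟩ := push_exists hα (hle hN)
    exact ⟨hle hN, k, ⟨h, hN, pk⟩, pk⟩

theorem piSub_piPre (hα : S.IsCongruence α) {K : Subgroup (Equiv.Perm (Quotient α))}
    (hle : K ≤ (S.quotLQ α hα).LMlt) : piSub α (S.piPre α K) = K := by
  ext k
  rw [mem_piSub]
  constructor
  · rintro ⟨h, ⟨_, k', k'K, pk'⟩, pk⟩
    rwa [push_unique pk pk']
  · intro kK
    obtain ⟨h, hL, ph⟩ := push_surj hα (hle kK)
    exact ⟨h, ⟨hL, k, kK, ph⟩, ph⟩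

theorem piSub_mem_norm (hα : S.IsCongruence α) {N : Subgroup (Equiv.Perm Q)}
    (hN : N ∈ S.Norm) : piSub α N ∈ (S.quotLQ α hα).Norm := by
  obtain ⟨hle, hconj, hdis⟩ := hN
  refine ⟨?_, ?_, ?_⟩
  · rintro k ⟨h, hNm, ph⟩
    obtain ⟨k', k'L, ph'⟩ := push_exists hα (hle hNm)
    rwa [push_unique ph ph']
  · rintro kh khL kn ⟨n, nN, pn⟩
    obtain ⟨h, hL, ph⟩ := push_surj hα khL
    exact ⟨h * n * h⁻¹, hconj h hL n nN, push_mul (push_mul ph pn) (push_inv ph)⟩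
  · refine (Subgroup.closure_le _).2 ?_
    rintro g ⟨k, kL, a, b, ⟨m, ⟨n, nN, pn⟩, hmb⟩, rfl⟩
    obtain ⟨h, hL, ph⟩ := push_surj hα kL
    obtain ⟨y, rfl⟩ := b.exists_rep
    have ha : a = Quotient.mk α (n y) := by rw [← hmb, pn y]
    subst ha
    refine ⟨h * (S.L (n y) * (S.L y)⁻¹) * h⁻¹,
      hdis (Subgroup.subset_closure ⟨h, hL, n y, y, ⟨n, nN, rfl⟩, rfl⟩), ?_⟩
    exact push_mul (push_mul ph (push_mul (push_L hα (n y)) (push_inv (push_L hα y))))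
      (push_inv ph)

theorem piPre_mem_norm (hα : S.IsCongruence α) {K : Subgroup (Equiv.Perm (Quotient α))}
    (hK : K ∈ (S.quotLQ α hα).Norm) :
    S.piPre α K ∈ S.Norm ∧ S.lmltKer α ≤ S.piPre α K := by
  obtain ⟨hle, hconj, hdis⟩ := hK
  refine ⟨⟨fun h hh => hh.1, ?_, ?_⟩, ?_⟩
  · rintro h hL n ⟨nL, k, kK, pk⟩
    obtain ⟨kh, khL, ph⟩ := push_exists hα hL
    exact ⟨mul_mem (mul_mem hL nL) (inv_mem hL), kh * k * kh⁻¹, hconj kh khL k kK,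
      push_mul (push_mul ph pk) (push_inv ph)⟩
  · refine (Subgroup.closure_le _).2 ?_
    rintro g ⟨h, hL, x, y, ⟨n, ⟨nL, k, kK, pk⟩, rfl⟩, rfl⟩
    obtain ⟨kh, khL, ph⟩ := push_exists hα hL
    refine ⟨mul_mem (mul_mem hL (mul_mem (S.L_mem_lmlt _) (inv_mem (S.L_mem_lmlt _))))
        (inv_mem hL),
      kh * ((S.quotLQ α hα).L (Quotient.mk α (n y)) * ((S.quotLQ α hα).L (Quotient.mk α y))⁻¹)
        * kh⁻¹,
      hdis (Subgroup.subset_closure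
        ⟨kh, khL, Quotient.mk α (n y), Quotient.mk α y, ⟨k, kK, pk y⟩, rfl⟩),
      push_mul (push_mul ph (push_mul (push_L hα (n y)) (push_inv (push_L hα y))))
        (push_inv ph)⟩
  · rintro h ⟨hL, hk⟩
    exact ⟨hL, 1, K.one_mem, ker_push hk⟩

end LeftQuasigroupAux

/-- `π_α` and `π_α⁻¹` give a lattice isomorphism between
`{N ∈ Norm(Q) : LMlt^α ≤ N}` and `Norm(Q/α)`. -/
theorem stmt3 {Q : Type*} (S : LeftQuasigroup Q) (α : Setoid Q) (hα : S.IsCongruence α) :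
    ∃ e : {N : Subgroup (Equiv.Perm Q) // N ∈ S.Norm ∧ S.lmltKer α ≤ N} ≃o
        {K : Subgroup (Equiv.Perm (Quotient α)) // K ∈ (S.quotLQ α hα).Norm},
      (∀ N, (e N : Subgroup (Equiv.Perm (Quotient α))) = LeftQuasigroup.piSub α N) ∧
      (∀ K, (e.symm K : Subgroup (Equiv.Perm Q)) = S.piPre α K) := by
  refine ⟨⟨⟨fun N => ⟨LeftQuasigroup.piSub α N.1, LeftQuasigroupAux.piSub_mem_norm hα N.2.1⟩,
      fun K => ⟨S.piPre α K.1, LeftQuasigroupAux.piPre_mem_norm hα K.2⟩,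
      fun N => Subtype.ext (LeftQuasigroupAux.piPre_piSub hα N.2.1.1 N.2.2),
      fun K => Subtype.ext (LeftQuasigroupAux.piSub_piPre hα K.2.1)⟩, ?_⟩,
    fun _ => rfl, fun _ => rfl⟩
  intro N N'
  simp only [Equiv.coe_fn_mk, Subtype.mk_le_mk, ← Subtype.coe_le_coe]
  constructor
  · intro hle g hg
    have h1 : g ∈ S.piPre α (LeftQuasigroup.piSub α (N : Subgroup (Equiv.Perm Q))) := by
      rw [LeftQuasigroupAux.piPre_piSub hα N.2.1.1 N.2.2]; exact hg
    obtain ⟨gL, k, kN, pk⟩ := h1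
    have h2 : g ∈ S.piPre α (LeftQuasigroup.piSub α (N' : Subgroup (Equiv.Perm Q))) :=
      ⟨gL, k, hle kN, pk⟩
    rwa [LeftQuasigroupAux.piPre_piSub hα N'.2.1.1 N'.2.2] at h2
  · rintro hle k ⟨h, hN, ph⟩
    exact ⟨h, hle hN, ph⟩
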